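/- Let f be a positive semi-definite quartic form in ℝ[x,y,z] whose set of real projective zeros is finite, nonempty, and entirely contained in a single projective line. Then f has at most 2 real projective zeros; equivalently, a psd ternary quartic cannot have exactly three (or more, but finitely many) collinear real projective zeros. -/

import Mathlib

open MvPolynomial Polynomial

-- scaling lemma
lemma aux_eval_smul (f : MvPolynomial (Fin 3) ℝ) {n : ℕ} (h : f.IsHomogeneous n)
    (c : ℝ) (x : Fin 3 → ℝ) : MvPolynomial.eval (c • x) f = c ^ n * MvPolynomial.eval x f := by
  rw [MvPolynomial.eval_eq', MvPolynomial.eval_eq', Finset.mul_sum]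
  apply Finset.sum_congr rfl
  intro m hm
  have hdeg : m.degree = n := by
    by_contra hne
    exact MvPolynomial.mem_support_iff.mp hm (h.coeff_eq_zero hne)
  have hsum : ∑ i : Fin 3, m i = n := by
    rw [← hdeg, Finsupp.degree]
    exact (Finset.sum_subset (Finset.subset_univ _)
      (fun i _ hi => Finsupp.notMem_support_iff.mp hi)).symm
  have : ∏ i : Fin 3, (c • x) i ^ m i = c ^ n * ∏ i : Fin 3, x i ^ m i := by
    simp only [Pi.smul_apply, smul_eq_mul, mul_pow, Finset.prod_mul_distrib,
      Finset.prod_pow_eq_pow_sum, hsum]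
  rw [this]; ring

lemma aux_natDegree (f : MvPolynomial (Fin 3) ℝ) {n : ℕ} (hf : f.IsHomogeneous n)
    (u w : Fin 3 → ℝ) :
    (MvPolynomial.eval₂ Polynomial.C
      (fun i => Polynomial.C (u i) + Polynomial.X * Polynomial.C (w i)) f).natDegree ≤ n := by
  rw [MvPolynomial.eval₂_eq']
  apply Polynomial.natDegree_sum_le_of_forall_le
  intro m hm
  have hdeg : m.degree = n := by
    by_contra hne
    exact MvPolynomial.mem_support_iff.mp hm (hf.coeff_eq_zero hne)
  have hsum : ∑ i : Fin 3, m i = n := by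
    rw [← hdeg, Finsupp.degree]
    exact (Finset.sum_subset (Finset.subset_univ _)
      (fun i _ hi => Finsupp.notMem_support_iff.mp hi)).symm
  calc (Polynomial.C (MvPolynomial.coeff m f) *
        ∏ i : Fin 3, (Polynomial.C (u i) + Polynomial.X * Polynomial.C (w i)) ^ m i).natDegree
      ≤ (Polynomial.C (MvPolynomial.coeff m f)).natDegree +
        (∏ i : Fin 3, (Polynomial.C (u i) + Polynomial.X * Polynomial.C (w i)) ^ m i).natDegree :=
        Polynomial.natDegree_mul_le
    _ ≤ 0 + ∑ i : Fin 3, ((Polynomial.C (u i) + Polynomial.X * Polynomial.C (w i)) ^ m i).natDegree := by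
        gcongr
        · exact le_of_eq (Polynomial.natDegree_C _)
        · exact Polynomial.natDegree_prod_le _ _
    _ ≤ ∑ i : Fin 3, m i * 1 := by
        rw [zero_add]
        apply Finset.sum_le_sum
        intro i _
        refine le_trans Polynomial.natDegree_pow_le ?_
        gcongr
        refine le_trans (Polynomial.natDegree_add_le _ _) ?_
        simp only [Polynomial.natDegree_C, max_le_iff]
        constructor
        · omega
        · exact le_trans (Polynomial.natDegree_mul_le) (by simp)
    _ = n := by simpa using hsum

lemma aux_eval_eval₂ (f : MvPolynomial (Fin 3) ℝ) (u w : Fin 3 → ℝ) (t : ℝ) :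
    Polynomial.eval t (MvPolynomial.eval₂ Polynomial.C
      (fun i => Polynomial.C (u i) + Polynomial.X * Polynomial.C (w i)) f)
      = MvPolynomial.eval (u + t • w) f := by
  have h := MvPolynomial.eval₂_comp_left (Polynomial.evalRingHom t) Polynomial.C
    (fun i => Polynomial.C (u i) + Polynomial.X * Polynomial.C (w i)) f
  rw [Polynomial.coe_evalRingHom] at h
  rw [h, ← MvPolynomial.eval₂_id]
  have h1 : (Polynomial.evalRingHom t).comp Polynomial.C = RingHom.id ℝ := by
    ext r; simp
  have h2 : (Polynomial.eval t ∘ fun i => Polynomial.C (u i) + Polynomial.X * Polynomial.C (w i))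
      = (u + t • w) := by
    funext i
    simp only [Function.comp_apply]
    rw [Polynomial.eval_add, Polynomial.eval_C, Polynomial.eval_mul, Polynomial.eval_X,
      Polynomial.eval_C, Pi.add_apply, Pi.smul_apply, smul_eq_mul]
  rw [h1, h2]

-- double root lemma
lemma aux_double_root (g : Polynomial ℝ) (hg : g ≠ 0) (hnn : ∀ t, 0 ≤ g.eval t)
    (r : ℝ) (hr : g.eval r = 0) : (Polynomial.X - Polynomial.C r) ^ 2 ∣ g := by
  have hmin : IsLocalMin (fun x => g.eval x) r :=
    Filter.Eventually.of_forall (fun x => by simpa [hr] using hnn x)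
  have hder : deriv (fun x => g.eval x) r = 0 := hmin.deriv_eq_zero
  rw [Polynomial.deriv] at hder
  have h2 : 1 < g.rootMultiplicity r :=
    (Polynomial.one_lt_rootMultiplicity_iff_isRoot hg).mpr ⟨hr, hder⟩
  exact dvd_trans (pow_dvd_pow _ h2) (Polynomial.pow_rootMultiplicity_dvd g r)

theorem stmt_19 (f : MvPolynomial (Fin 3) ℝ) (hhom : f.IsHomogeneous 4)
    (hpsd : ∀ p : Fin 3 → ℝ, 0 ≤ eval p f)
    (S : Set (Projectivization ℝ (Fin 3 → ℝ)))
    (hS : S = {P | eval P.rep f = 0})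
    (hfin : S.Finite) (hne : S.Nonempty)
    (hline : ∃ l : (Fin 3 → ℝ) →ₗ[ℝ] ℝ, l ≠ 0 ∧ ∀ P ∈ S, l P.rep = 0) :
    S.ncard ≤ 2 := by
  obtain ⟨l, hl0, hlS⟩ := hline
  by_contra hcard
  push_neg at hcard
  obtain ⟨P₁, hP₁, P₂, hP₂, P₃, hP₃, h12, h13, h23⟩ := (Set.two_lt_ncard hfin).mp hcard
  set v₁ := P₁.rep with hv₁def
  set v₂ := P₂.rep with hv₂def
  set v₃ := P₃.rep with hv₃def
  have hv₁ : v₁ ≠ 0 := P₁.rep_nonzero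
  have hv₂ : v₂ ≠ 0 := P₂.rep_nonzero
  have hv₃ : v₃ ≠ 0 := P₃.rep_nonzero
  have hf₁ : eval v₁ f = 0 := by rw [hS] at hP₁; exact hP₁
  have hf₂ : eval v₂ f = 0 := by rw [hS] at hP₂; exact hP₂
  have hf₃ : eval v₃ f = 0 := by rw [hS] at hP₃; exact hP₃
  -- linear independence of v₁ v₂
  have hind : LinearIndependent ℝ ![v₁, v₂] := by
    have h := (Projectivization.independent_pair_iff_ne P₁ P₂).mpr h12
    rw [Projectivization.independent_iff] at h
    have : Projectivization.rep ∘ ![P₁, P₂] = ![v₁, v₂] := by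
      funext i; fin_cases i <;> rfl
    rwa [this] at h
  -- v₃ ∈ span {v₁, v₂}
  have hker : Submodule.span ℝ {v₁, v₂} ≤ LinearMap.ker l := by
    rw [Submodule.span_le]
    rintro x (rfl | rfl)
    · exact hlS P₁ hP₁
    · exact hlS P₂ hP₂
  have hk2 : Module.finrank ℝ (LinearMap.ker l) ≤ 2 := by
    have h3 := l.finrank_range_add_finrank_ker
    have hdim : Module.finrank ℝ (Fin 3 → ℝ) = 3 := by simp
    rw [hdim] at h3
    have hpos : 0 < Module.finrank ℝ (LinearMap.range l) := by
      rw [Module.finrank_pos_iff]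
      obtain ⟨x, hx⟩ : ∃ x, l x ≠ 0 := by
        by_contra h; push_neg at h; exact hl0 (LinearMap.ext h)
      exact ⟨⟨⟨l x, x, rfl⟩, 0, by simp [Subtype.ext_iff, hx]⟩⟩
    omega
  have hfr : Module.finrank ℝ (Submodule.span ℝ {v₁, v₂}) = 2 := by
    have h := finrank_span_eq_card hind
    have hr : Set.range ![v₁, v₂] = {v₁, v₂} := by
      ext x; simp [Fin.exists_fin_two, or_comm]
    rw [hr] at h
    simpa using h
  have hspan : Submodule.span ℝ {v₁, v₂} = LinearMap.ker l :=
    Submodule.eq_of_le_of_finrank_le hker (by rw [hfr]; exact hk2)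
  have hv₃mem : v₃ ∈ Submodule.span ℝ {v₁, v₂} := by
    rw [hspan]; exact hlS P₃ hP₃
  obtain ⟨a, b, hab⟩ := Submodule.mem_span_pair.mp hv₃mem
  -- a, b nonzero
  have ha : a ≠ 0 := by
    rintro rfl
    have hb : b ≠ 0 := by rintro rfl; simp at hab; exact hv₃ hab.symm
    apply h23
    rw [← P₂.mk_rep, ← P₃.mk_rep]
    exact ((Projectivization.mk_eq_mk_iff' ℝ v₃ v₂ hv₃ hv₂).mpr ⟨b, by simpa using hab⟩).symm
  have hb : b ≠ 0 := by
    rintro rfl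
    apply h13
    rw [← P₁.mk_rep, ← P₃.mk_rep]
    exact ((Projectivization.mk_eq_mk_iff' ℝ v₃ v₁ hv₃ hv₁).mpr ⟨a, by simpa using hab⟩).symm
  -- choose c
  set c : ℝ := |b / a| + 1 with hcdef
  have hc0 : c ≠ 0 := by positivity
  have hcb : c * a ≠ b := by
    intro h
    have : c = b / a := by field_simp at h ⊢; linarith [h]
    have h1 : b / a ≤ |b / a| := le_abs_self _
    rw [hcdef] at this
    linarith
  have hd : b - c * a ≠ 0 := fun h => hcb (by linarith [h])
  set w : Fin 3 → ℝ := v₁ + c • v₂ with hwdef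
  set g : Polynomial ℝ := MvPolynomial.eval₂ Polynomial.C
    (fun i => Polynomial.C (v₂ i) + Polynomial.X * Polynomial.C (w i)) f with hgdef
  have hgt : ∀ t, g.eval t = eval (v₂ + t • w) f := fun t => aux_eval_eval₂ f v₂ w t
  have hcomb : ∀ t : ℝ, v₂ + t • w = t • v₁ + (1 + t * c) • v₂ := by
    intro t; rw [hwdef]; module
  have hgnn : ∀ t, 0 ≤ g.eval t := fun t => by rw [hgt]; exact hpsd _
  -- independence consequences
  have hpair := LinearIndependent.pair_iff.mp hind
  by_cases hg : g = 0
  · -- f vanishes on the whole line: S infinite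
    have hneq : ∀ t : ℝ, v₂ + t • w ≠ 0 := by
      intro t h
      rw [hcomb] at h
      obtain ⟨h1, h2⟩ := hpair t (1 + t * c) h
      rw [h1] at h2; simp at h2
    have hmem : ∀ t : ℝ, Projectivization.mk ℝ (v₂ + t • w) (hneq t) ∈ S := by
      intro t
      obtain ⟨α, hα⟩ := Projectivization.exists_smul_eq_mk_rep ℝ (v₂ + t • w) (hneq t)
      rw [hS]
      show eval (Projectivization.mk ℝ (v₂ + t • w) (hneq t)).rep f = 0
      rw [← hα, Units.smul_def, aux_eval_smul f hhom]
      have : eval (v₂ + t • w) f = 0 := by rw [← hgt, hg]; simp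
      rw [this]; ring
    have hinj : Function.Injective (fun t => Projectivization.mk ℝ (v₂ + t • w) (hneq t)) := by
      intro s t h
      simp only at h
      rw [Projectivization.mk_eq_mk_iff' ℝ _ _ (hneq s) (hneq t)] at h
      obtain ⟨α, hα⟩ := h
      rw [hcomb, hcomb] at hα
      have : (α * t - s) • v₁ + (α * (1 + t * c) - (1 + s * c)) • v₂ = 0 := by
        rw [smul_add, smul_smul, smul_smul] at hα
        have := sub_eq_zero.mpr hα
        rw [← this]; module
      obtain ⟨h1, h2⟩ := hpair _ _ this
      have hst : s = α * t := by linarith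
      subst hst
      have hα1 : α = 1 := by ring_nf at h2 ⊢; nlinarith [h2]
      rw [hα1]; ring
    exact hfin.not_infinite (Set.infinite_of_injective_forall_mem hinj hmem)
  · -- g ≠ 0 : degree contradiction
    set t₁ : ℝ := -1 / c with ht₁def
    set t₃ : ℝ := a / (b - c * a) with ht₃def
    have hr₁ : g.eval t₁ = 0 := by
      rw [hgt]
      have : v₂ + t₁ • w = (-1 / c) • v₁ := by
        rw [hwdef, ht₁def]
        match_scalars <;> field_simp <;> norm_num
      rw [this, aux_eval_smul f hhom, hf₁]; ring
    have hr₂ : g.eval 0 = 0 := by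
      rw [hgt]; simpa using hf₂
    have hr₃ : g.eval t₃ = 0 := by
      rw [hgt]
      have : v₂ + t₃ • w = (t₃ / a) • v₃ := by
        rw [← hab, hwdef, ht₃def]
        have hd' : -(a * c) + b ≠ 0 := by intro h; apply hd; linarith
        match_scalars
        all_goals field_simp
        all_goals ring
        all_goals field_simp
        all_goals ring
      rw [this, aux_eval_smul f hhom, hf₃]; ring
    have ht₁0 : t₁ ≠ 0 := by
      rw [ht₁def]; exact div_ne_zero (by norm_num) hc0
    have ht₃0 : t₃ ≠ 0 := div_ne_zero ha hd
    have ht₁₃ : t₁ ≠ t₃ := by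
      intro h
      rw [ht₁def, ht₃def, div_eq_div_iff hc0 hd] at h
      apply hb
      nlinarith [h]
    have hdvd1 := aux_double_root g hg hgnn t₁ hr₁
    have hdvd2 := aux_double_root g hg hgnn 0 hr₂
    have hdvd3 := aux_double_root g hg hgnn t₃ hr₃
    have cop12 : IsCoprime (Polynomial.X - Polynomial.C t₁) (Polynomial.X - Polynomial.C (0:ℝ)) :=
      Polynomial.isCoprime_X_sub_C_of_isUnit_sub ((sub_ne_zero.mpr ht₁0).isUnit)
    have cop13 : IsCoprime (Polynomial.X - Polynomial.C t₁) (Polynomial.X - Polynomial.C t₃) :=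
      Polynomial.isCoprime_X_sub_C_of_isUnit_sub ((sub_ne_zero.mpr ht₁₃).isUnit)
    have cop23 : IsCoprime (Polynomial.X - Polynomial.C (0:ℝ)) (Polynomial.X - Polynomial.C t₃) :=
      Polynomial.isCoprime_X_sub_C_of_isUnit_sub ((sub_ne_zero.mpr (Ne.symm ht₃0)).isUnit)
    have hdvd12 : (Polynomial.X - Polynomial.C t₁) ^ 2 * (Polynomial.X - Polynomial.C (0:ℝ)) ^ 2 ∣ g :=
      (cop12.pow).mul_dvd hdvd1 hdvd2
    have hdvd123 : (Polynomial.X - Polynomial.C t₁) ^ 2 * (Polynomial.X - Polynomial.C (0:ℝ)) ^ 2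
        * (Polynomial.X - Polynomial.C t₃) ^ 2 ∣ g :=
      ((cop13.pow).mul_left (cop23.pow)).mul_dvd hdvd12 hdvd3
    have h6 : ((Polynomial.X - Polynomial.C t₁) ^ 2 * (Polynomial.X - Polynomial.C (0:ℝ)) ^ 2
        * (Polynomial.X - Polynomial.C t₃) ^ 2).natDegree = 6 := by
      compute_degree!
    have hle := Polynomial.natDegree_le_of_dvd hdvd123 hg
    have hle4 := aux_natDegree f hhom v₂ w
    rw [h6] at hle
    rw [← hgdef] at hle4
    omega
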